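/- Let T = {2413, 2431, 3214}. If π ∈ S_n avoids T and begins with the two letters i, j where 2 ≤ j < i ≤ n−1 and j ≥ 2, then π has the form i j (j+1)(j+2)⋯n (with i omitted from the increasing run) followed by a T-avoiding permutation of [j−1]; consequently the number of such permutations equals |S_{j−1}(T)|. -/

import Mathlib

set_option maxRecDepth 20000

/-- A word `π` contains the pattern `τ` if some subsequence of `π` is
order-isomorphic to `τ`. -/
def containsPat {n k : ℕ} (π : Fin n → Fin n) (τ : Fin k → Fin k) : Prop :=
  ∃ f : Fin k → Fin n, StrictMono f ∧ ∀ i j : Fin k, τ i < τ j ↔ π (f i) < π (f j)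

/-- `π` avoids the pattern `τ`. -/
def avoidsPat {n k : ℕ} (π : Fin n → Fin n) (τ : Fin k → Fin k) : Prop :=
  ¬ containsPat π τ

section Helpers

lemma contains_1302 {m : ℕ} (π : Fin m → Fin m)
    (p0 p1 p2 p3 : Fin m) (h01 : p0 < p1) (h12 : p1 < p2) (h23 : p2 < p3)
    (hA : (π p2 : ℕ) < π p0) (hB : (π p0 : ℕ) < π p3) (hC : (π p3 : ℕ) < π p1) :
    containsPat π ![1,3,0,2] := by
  have h01' := Fin.lt_def.mp h01
  have h12' := Fin.lt_def.mp h12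
  have h23' := Fin.lt_def.mp h23
  refine ⟨![p0,p1,p2,p3], ?_, ?_⟩ <;>
  · simp only [StrictMono, Fin.lt_def, Fin.forall_fin_succ, IsEmpty.forall_iff,
      Matrix.cons_val_zero, Matrix.cons_val_succ, Fin.val_succ, Fin.val_zero,
      Fin.succ_zero_eq_one, Fin.val_one,
      (show ((2:Fin 4):ℕ) = 2 from rfl), (show ((3:Fin 4):ℕ) = 3 from rfl), and_true, true_and]
    omega

lemma contains_1320 {m : ℕ} (π : Fin m → Fin m)
    (p0 p1 p2 p3 : Fin m) (h01 : p0 < p1) (h12 : p1 < p2) (h23 : p2 < p3)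
    (hA : (π p3 : ℕ) < π p0) (hB : (π p0 : ℕ) < π p2) (hC : (π p2 : ℕ) < π p1) :
    containsPat π ![1,3,2,0] := by
  have h01' := Fin.lt_def.mp h01
  have h12' := Fin.lt_def.mp h12
  have h23' := Fin.lt_def.mp h23
  refine ⟨![p0,p1,p2,p3], ?_, ?_⟩ <;>
  · simp only [StrictMono, Fin.lt_def, Fin.forall_fin_succ, IsEmpty.forall_iff,
      Matrix.cons_val_zero, Matrix.cons_val_succ, Fin.val_succ, Fin.val_zero,
      Fin.succ_zero_eq_one, Fin.val_one,
      (show ((2:Fin 4):ℕ) = 2 from rfl), (show ((3:Fin 4):ℕ) = 3 from rfl), and_true, true_and]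
    omega

lemma contains_2103 {m : ℕ} (π : Fin m → Fin m)
    (p0 p1 p2 p3 : Fin m) (h01 : p0 < p1) (h12 : p1 < p2) (h23 : p2 < p3)
    (hA : (π p2 : ℕ) < π p1) (hB : (π p1 : ℕ) < π p0) (hC : (π p0 : ℕ) < π p3) :
    containsPat π ![2,1,0,3] := by
  have h01' := Fin.lt_def.mp h01
  have h12' := Fin.lt_def.mp h12
  have h23' := Fin.lt_def.mp h23
  refine ⟨![p0,p1,p2,p3], ?_, ?_⟩ <;>
  · simp only [StrictMono, Fin.lt_def, Fin.forall_fin_succ, IsEmpty.forall_iff,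
      Matrix.cons_val_zero, Matrix.cons_val_succ, Fin.val_succ, Fin.val_zero,
      Fin.succ_zero_eq_one, Fin.val_one,
      (show ((2:Fin 4):ℕ) = 2 from rfl), (show ((3:Fin 4):ℕ) = 3 from rfl), and_true, true_and]
    omega

lemma chain_of_contains_1302 {m : ℕ} (π : Fin m → Fin m) (h : containsPat π ![1,3,0,2]) :
    ∃ p0 p1 p2 p3 : Fin m, p0 < p1 ∧ p1 < p2 ∧ p2 < p3 ∧
      (π p2 : ℕ) < π p0 ∧ (π p0 : ℕ) < π p3 ∧ (π p3 : ℕ) < π p1 := by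
  obtain ⟨f, hf, hiff⟩ := h
  exact ⟨f 0, f 1, f 2, f 3, hf (by decide), hf (by decide), hf (by decide),
    Fin.lt_def.mp ((hiff 2 0).mp (by decide)),
    Fin.lt_def.mp ((hiff 0 3).mp (by decide)),
    Fin.lt_def.mp ((hiff 3 1).mp (by decide))⟩

lemma chain_of_contains_1320 {m : ℕ} (π : Fin m → Fin m) (h : containsPat π ![1,3,2,0]) :
    ∃ p0 p1 p2 p3 : Fin m, p0 < p1 ∧ p1 < p2 ∧ p2 < p3 ∧
      (π p3 : ℕ) < π p0 ∧ (π p0 : ℕ) < π p2 ∧ (π p2 : ℕ) < π p1 := by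
  obtain ⟨f, hf, hiff⟩ := h
  exact ⟨f 0, f 1, f 2, f 3, hf (by decide), hf (by decide), hf (by decide),
    Fin.lt_def.mp ((hiff 3 0).mp (by decide)),
    Fin.lt_def.mp ((hiff 0 2).mp (by decide)),
    Fin.lt_def.mp ((hiff 2 1).mp (by decide))⟩

lemma chain_of_contains_2103 {m : ℕ} (π : Fin m → Fin m) (h : containsPat π ![2,1,0,3]) :
    ∃ p0 p1 p2 p3 : Fin m, p0 < p1 ∧ p1 < p2 ∧ p2 < p3 ∧
      (π p2 : ℕ) < π p1 ∧ (π p1 : ℕ) < π p0 ∧ (π p0 : ℕ) < π p3 := by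
  obtain ⟨f, hf, hiff⟩ := h
  exact ⟨f 0, f 1, f 2, f 3, hf (by decide), hf (by decide), hf (by decide),
    Fin.lt_def.mp ((hiff 2 1).mp (by decide)),
    Fin.lt_def.mp ((hiff 1 0).mp (by decide)),
    Fin.lt_def.mp ((hiff 0 3).mp (by decide))⟩

lemma transfer {n m k : ℕ} (π : Fin n → Fin n) (σ : Fin m → Fin m) (ι : Fin m → Fin n)
    (hι : StrictMono ι) (hval : ∀ x, (σ x : ℕ) = (π (ι x) : ℕ)) (τ : Fin k → Fin k) :
    containsPat σ τ → containsPat π τ := by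
  rintro ⟨f, hf, hiff⟩
  refine ⟨ι ∘ f, hι.comp hf, fun a b => (hiff a b).trans ?_⟩
  simp only [Function.comp, Fin.lt_def, hval]

end Helpers

section Tval

/-- the forced value at position `m` (`0`-indexed) for `2 ≤ m ≤ n - j`. -/
def tval (i j m : ℕ) : ℕ := if j + m - 1 < i then j + m - 2 else j + m - 1

lemma tval_mono {i j : ℕ} (hj : 2 ≤ j) (hij : j < i) {a b : ℕ} (h2 : 2 ≤ a) (hab : a < b) :
    tval i j a < tval i j b := by unfold tval; split_ifs <;> omega

lemma tval_lb {i j m : ℕ} (hj : 2 ≤ j) (hij : j < i) (h2 : 2 ≤ m) : j ≤ tval i j m := by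
  unfold tval; split_ifs <;> omega

lemma tval_ub {i j m : ℕ} (hj : 2 ≤ j) : tval i j m ≤ j + m - 1 := by
  unfold tval; split_ifs <;> omega

lemma tval_ne {i j m : ℕ} (hj : 2 ≤ j) (hij : j < i) (h2 : 2 ≤ m) : tval i j m ≠ i - 1 := by
  unfold tval; split_ifs <;> omega

lemma tval_surj {n i j v : ℕ} (hj : 2 ≤ j) (hij : j < i) (hi : i ≤ n - 1)
    (h1 : j ≤ v) (h2 : v ≤ n - 1) (h3 : v ≠ i - 1) :
    ∃ m, 2 ≤ m ∧ m + j ≤ n ∧ tval i j m = v := by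
  rcases Nat.lt_or_ge v (i - 1) with h | h
  · exact ⟨v - j + 2, by omega, by omega, by unfold tval; split_ifs <;> omega⟩
  · exact ⟨v - j + 1, by omega, by omega, by unfold tval; split_ifs <;> omega⟩

end Tval

section Structural

lemma structural (n i j : ℕ) (hj : 2 ≤ j) (hij : j < i) (hi : i ≤ n - 1)
    (π : Equiv.Perm (Fin n))
    (hav1 : avoidsPat (⇑π) ![1,3,0,2]) (hav2 : avoidsPat (⇑π) ![1,3,2,0])
    (hav3 : avoidsPat (⇑π) ![2,1,0,3])
    (hp0 : (π ⟨0, by clear hj; omega⟩ : ℕ) = i - 1) (hp1 : (π ⟨1, by clear hj; omega⟩ : ℕ) = j - 1) :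
    ∀ k : ℕ, ∀ hk : k < n, 2 ≤ k → k + j ≤ n → (π ⟨k, hk⟩ : ℕ) = tval i j k := by
  have hn : 4 ≤ n := by omega
  have h0n : (0:ℕ) < n := by omega
  have h1n : (1:ℕ) < n := by omega
  have hp0' : (π ⟨0, h0n⟩ : ℕ) = i - 1 := hp0
  have hp1' : (π ⟨1, h1n⟩ : ℕ) = j - 1 := hp1
  have hinj : ∀ a b : Fin n, (π a : ℕ) = (π b : ℕ) → (a : ℕ) = (b : ℕ) := fun a b h =>
    congrArg Fin.val (π.injective (Fin.val_injective h))
  intro k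
  induction k using Nat.strong_induction_on with
  | _ k IH =>
    intro hk h2k hkj
    have hdet : ∀ m : ℕ, ∀ hm : m < n, m < k →
        (m = 0 → (π ⟨m, hm⟩ : ℕ) = i - 1) ∧ (m = 1 → (π ⟨m, hm⟩ : ℕ) = j - 1) ∧
        (2 ≤ m → (π ⟨m, hm⟩ : ℕ) = tval i j m) := by
      intro m hm hmk
      refine ⟨?_, ?_, ?_⟩
      · rintro rfl; exact hp0
      · rintro rfl; exact hp1
      · intro h2m; exact IH m hmk hm h2m (by omega)
    have hfind : ∀ v : ℕ, ∀ hv : v < n,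
        (∀ m : ℕ, ∀ hm : m < n, m < k → (π ⟨m, hm⟩ : ℕ) ≠ v) →
        ∃ p : Fin n, k ≤ (p : ℕ) ∧ (π p : ℕ) = v := by
      intro v hv hnot
      refine ⟨π.symm ⟨v, hv⟩, ?_, by simp⟩
      by_contra hlt
      push_neg at hlt
      refine hnot ((π.symm ⟨v, hv⟩ : Fin n) : ℕ) (π.symm ⟨v, hv⟩).isLt hlt ?_
      rw [Fin.eta]
      simp
    rcases lt_trichotomy ((π ⟨k, hk⟩ : ℕ)) (tval i j k) with hlt | heq | hgt
    · exfalso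
      by_cases hsmall : (π ⟨k, hk⟩ : ℕ) < j - 1
      · -- small value before the max : pattern 2103
        have hnb : ∀ m : ℕ, ∀ hm : m < n, m < k → (π ⟨m, hm⟩ : ℕ) ≠ n - 1 := by
          intro m hm hmk hveq
          obtain ⟨d0, d1, d2⟩ := hdet m hm hmk
          rcases Nat.lt_or_ge m 2 with h | h
          · rcases (show m = 0 ∨ m = 1 by omega) with rfl | rfl
            · have := d0 rfl; omega
            · have := d1 rfl; omega
          · have h3 := d2 h
            have h4 := tval_ub (i := i) (j := j) (m := m) hj
            omega
        obtain ⟨q, hqk, hqv⟩ := hfind (n - 1) (by omega) hnb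
        have hqk' : k < (q : ℕ) := by
          rcases Nat.eq_or_lt_of_le hqk with h | h
          · exfalso
            have hq : q = ⟨k, hk⟩ := Fin.val_injective h.symm
            rw [hq] at hqv; omega
          · exact h
        exact hav3 (contains_2103 (⇑π) ⟨0, h0n⟩ ⟨1, h1n⟩ ⟨k, hk⟩ q
          (Fin.mk_lt_mk.mpr (by omega)) (Fin.mk_lt_mk.mpr (by omega))
          (Fin.lt_def.mpr hqk')
          (by rw [hp1']; omega) (by rw [hp1', hp0']; omega) (by rw [hp0', hqv]; omega))
      · push_neg at hsmall
        have hvB : (π ⟨k, hk⟩ : ℕ) ≠ i - 1 := by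
          intro h
          have hk0 : k = 0 := hinj ⟨k, hk⟩ ⟨0, h0n⟩ (by rw [hp0']; exact h)
          omega
        have hvS : (π ⟨k, hk⟩ : ℕ) ≠ j - 1 := by
          intro h
          have hk1 : k = 1 := hinj ⟨k, hk⟩ ⟨1, h1n⟩ (by rw [hp1']; exact h)
          omega
        obtain ⟨m, hm2, hmjn, hmt⟩ := tval_surj (n := n) hj hij hi (by omega)
          (by have := (π ⟨k, hk⟩).isLt; omega) hvB
        have hmk : m < k := by
          rcases Nat.lt_or_ge m k with h | h
          · exact h
          · exfalso
            rcases Nat.eq_or_lt_of_le h with h' | h'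
            · have : tval i j k = tval i j m := by rw [h']
              omega
            · have := tval_mono (i := i) hj hij h2k h'
              omega
        have hmn : m < n := by omega
        have hmv : (π ⟨m, hmn⟩ : ℕ) = tval i j m := (hdet m hmn hmk).2.2 hm2
        have : k = m := hinj ⟨k, hk⟩ ⟨m, hmn⟩ (by omega)
        omega
    · exact heq
    · exfalso
      have htub := tval_ub (i := i) (j := j) (m := k) hj
      have htlb := tval_lb (i := i) (j := j) (m := k) hj hij h2k
      have htn : tval i j k < n := by omega
      have hnb1 : ∀ m : ℕ, ∀ hm : m < n, m < k → (π ⟨m, hm⟩ : ℕ) ≠ tval i j k := by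
        intro m hm hmk hveq
        obtain ⟨d0, d1, d2⟩ := hdet m hm hmk
        rcases Nat.lt_or_ge m 2 with h | h
        · have htne := tval_ne (i := i) (j := j) (m := k) hj hij h2k
          rcases (show m = 0 ∨ m = 1 by omega) with rfl | rfl
          · have := d0 rfl; omega
          · have := d1 rfl; omega
        · have h3 := d2 h
          have := tval_mono (i := i) hj hij h hmk
          omega
      obtain ⟨p', hp'k, hp'v⟩ := hfind (tval i j k) htn hnb1
      have hp'k' : k < (p' : ℕ) := by
        rcases Nat.eq_or_lt_of_le hp'k with h | h
        · exfalso
          have hq : p' = ⟨k, hk⟩ := Fin.val_injective h.symm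
          rw [hq] at hp'v; omega
        · exact h
      have hnb0 : ∀ m : ℕ, ∀ hm : m < n, m < k → (π ⟨m, hm⟩ : ℕ) ≠ 0 := by
        intro m hm hmk hveq
        obtain ⟨d0, d1, d2⟩ := hdet m hm hmk
        rcases Nat.lt_or_ge m 2 with h | h
        · rcases (show m = 0 ∨ m = 1 by omega) with rfl | rfl
          · have := d0 rfl; omega
          · have := d1 rfl; omega
        · have h3 := d2 h
          have := tval_lb (i := i) (j := j) (m := m) hj hij h
          omega
      obtain ⟨r, hrk, hrv⟩ := hfind 0 (by omega) hnb0
      have hrk' : k < (r : ℕ) := by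
        rcases Nat.eq_or_lt_of_le hrk with h | h
        · exfalso
          have hq : r = ⟨k, hk⟩ := Fin.val_injective h.symm
          rw [hq] at hrv; omega
        · exact h
      have hrp' : (r : ℕ) ≠ (p' : ℕ) := by
        intro h
        have hq : r = p' := Fin.val_injective h
        rw [hq] at hrv; omega
      rcases Nat.lt_or_ge (r : ℕ) (p' : ℕ) with hc | hc
      · exact hav1 (contains_1302 (⇑π) ⟨1, h1n⟩ ⟨k, hk⟩ r p'
          (Fin.mk_lt_mk.mpr (by omega)) (Fin.lt_def.mpr hrk') (Fin.lt_def.mpr hc)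
          (by rw [hrv, hp1']; omega) (by rw [hp1', hp'v]; omega) (by rw [hp'v]; omega))
      · have hc' : (p' : ℕ) < (r : ℕ) := by omega
        exact hav2 (contains_1320 (⇑π) ⟨1, h1n⟩ ⟨k, hk⟩ p' r
          (Fin.mk_lt_mk.mpr (by omega)) (Fin.lt_def.mpr hp'k') (Fin.lt_def.mpr hc')
          (by rw [hrv, hp1']; omega) (by rw [hp1', hp'v]; omega) (by rw [hp'v]; omega))

lemma tail_lt (n i j : ℕ) (hj : 2 ≤ j) (hij : j < i) (hi : i ≤ n - 1)
    (π : Equiv.Perm (Fin n))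
    (hav1 : avoidsPat (⇑π) ![1,3,0,2]) (hav2 : avoidsPat (⇑π) ![1,3,2,0])
    (hav3 : avoidsPat (⇑π) ![2,1,0,3])
    (hp0 : (π ⟨0, by clear hj; omega⟩ : ℕ) = i - 1) (hp1 : (π ⟨1, by clear hj; omega⟩ : ℕ) = j - 1) :
    ∀ p : Fin n, n - j < (p : ℕ) → (π p : ℕ) < j - 1 := by
  have hn : 4 ≤ n := by omega
  have h0n : (0:ℕ) < n := by omega
  have h1n : (1:ℕ) < n := by omega
  have hp0' : (π ⟨0, h0n⟩ : ℕ) = i - 1 := hp0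
  have hp1' : (π ⟨1, h1n⟩ : ℕ) = j - 1 := hp1
  have hinj : ∀ a b : Fin n, (π a : ℕ) = (π b : ℕ) → (a : ℕ) = (b : ℕ) := fun a b h =>
    congrArg Fin.val (π.injective (Fin.val_injective h))
  intro p hp
  by_contra hge
  push_neg at hge
  rcases Nat.eq_or_lt_of_le hge with h | h
  · have hp1eq : (p : ℕ) = 1 := hinj p ⟨1, h1n⟩ (by omega)
    omega
  · by_cases hB : (π p : ℕ) = i - 1
    · have hp0eq : (p : ℕ) = 0 := hinj p ⟨0, h0n⟩ (by omega)
      omega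
    · obtain ⟨m, hm2, hmjn, hmt⟩ := tval_surj (n := n) hj hij hi (by omega)
        (by have := (π p).isLt; omega) hB
      have hmn : m < n := by omega
      have hms := structural n i j hj hij hi π hav1 hav2 hav3 hp0 hp1 m hmn hm2 (by omega)
      have hpm : (p : ℕ) = m := hinj p ⟨m, hmn⟩ (by omega)
      omega

end Structural
section Construction

/-- extend a map on `Fin m` to `ℕ`. -/
def natize {m : ℕ} (σ : Fin m → Fin m) : ℕ → ℕ := fun x => if hx : x < m then σ ⟨x, hx⟩ else 0

lemma natize_lt {m : ℕ} (σ : Fin m → Fin m) {x : ℕ} (hx : x < m) : natize σ x < m := by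
  unfold natize; rw [dif_pos hx]; exact (σ ⟨x, hx⟩).isLt

/-- the value of the constructed permutation at position `p`. -/
def gv (n i j : ℕ) (σ : Fin (j-1) → Fin (j-1)) (p : ℕ) : ℕ :=
  if p = 0 then i - 1 else if p = 1 then j - 1 else if p ≤ n - j then tval i j p
  else natize σ (p - (n - j + 1))

lemma gv_zero (n i j : ℕ) (σ : Fin (j-1) → Fin (j-1)) : gv n i j σ 0 = i - 1 := by
  unfold gv; simp

lemma gv_one (n i j : ℕ) (σ : Fin (j-1) → Fin (j-1)) : gv n i j σ 1 = j - 1 := by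
  unfold gv; norm_num

lemma gv_head (n i j : ℕ) (σ : Fin (j-1) → Fin (j-1)) {p : ℕ} (h2 : 2 ≤ p) (hp : p ≤ n - j) :
    gv n i j σ p = tval i j p := by
  unfold gv; rw [if_neg (by omega), if_neg (by omega), if_pos hp]

lemma gv_tail_eq (n i j : ℕ) (hj : 2 ≤ j) (hij : j < i) (hi : i ≤ n - 1) (hn : 4 ≤ n)
    (σ : Fin (j-1) → Fin (j-1)) {p : ℕ} (h1 : n - j < p) (h2 : p < n) :
    ∃ hx : p - (n - j + 1) < j - 1, gv n i j σ p = (σ ⟨p - (n - j + 1), hx⟩ : ℕ) := by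
  have hx : p - (n - j + 1) < j - 1 := by omega
  refine ⟨hx, ?_⟩
  unfold gv natize
  rw [if_neg (by omega), if_neg (by omega), if_neg (by omega), dif_pos hx]

lemma gv_tail_lt (n i j : ℕ) (hj : 2 ≤ j) (hij : j < i) (hi : i ≤ n - 1) (hn : 4 ≤ n)
    (σ : Fin (j-1) → Fin (j-1)) {p : ℕ} (h1 : n - j < p) (h2 : p < n) :
    gv n i j σ p < j - 1 := by
  obtain ⟨hx, he⟩ := gv_tail_eq n i j hj hij hi hn σ h1 h2
  rw [he]; exact (σ ⟨_, hx⟩).isLt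

lemma gv_head_ge (n i j : ℕ) (hj : 2 ≤ j) (hij : j < i) (hi : i ≤ n - 1)
    (σ : Fin (j-1) → Fin (j-1)) {p : ℕ} (h1 : 1 ≤ p) (h2 : p ≤ n - j) :
    j - 1 ≤ gv n i j σ p := by
  by_cases hp1 : p = 1
  · rw [hp1, gv_one n i j σ]
  · rw [gv_head n i j σ (by omega) h2]
    have := tval_lb (i := i) (j := j) (m := p) hj hij (by omega); omega

lemma gv_mono (n i j : ℕ) (hj : 2 ≤ j) (hij : j < i)
    (σ : Fin (j-1) → Fin (j-1)) {p q : ℕ} (h1 : 1 ≤ p) (hpq : p < q) (h2 : q ≤ n - j) :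
    gv n i j σ p < gv n i j σ q := by
  have h2q : 2 ≤ q := by omega
  rw [gv_head n i j σ h2q h2]
  by_cases hp1 : p = 1
  · rw [hp1, gv_one n i j σ]
    have := tval_lb (i := i) (j := j) (m := q) hj hij h2q; omega
  · rw [gv_head n i j σ (by omega) (by omega)]
    exact tval_mono hj hij (by omega) hpq

lemma gv_lt (n i j : ℕ) (hj : 2 ≤ j) (hij : j < i) (hi : i ≤ n - 1)
    (σ : Fin (j-1) → Fin (j-1)) {p : ℕ} (hp : p < n) : gv n i j σ p < n := by
  unfold gv
  split_ifs with h0 h1 h2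
  · omega
  · omega
  · have := tval_ub (i := i) (j := j) (m := p) hj; omega
  · have := natize_lt σ (x := p - (n - j + 1)) (by omega); omega

end Construction

section Gfun

/-- the constructed permutation, as a function. -/
def gfun (n i j : ℕ) (hj : 2 ≤ j) (hij : j < i) (hi : i ≤ n - 1)
    (σ : Fin (j-1) → Fin (j-1)) : Fin n → Fin n :=
  fun p => ⟨gv n i j σ (p : ℕ), gv_lt n i j hj hij hi σ p.isLt⟩

lemma gfun_inj (n i j : ℕ) (hj : 2 ≤ j) (hij : j < i) (hi : i ≤ n - 1) (hn : 4 ≤ n)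
    (σ : Equiv.Perm (Fin (j-1))) :
    Function.Injective (gfun n i j hj hij hi (⇑σ)) := by
  have key : ∀ a b : ℕ, a < b → b < n → gv n i j (⇑σ) a ≠ gv n i j (⇑σ) b := by
    intro a b hab hb hgv
    rcases Nat.lt_or_ge (n - j) b with hbt | hbh
    · obtain ⟨hxb, heb⟩ := gv_tail_eq n i j hj hij hi hn (⇑σ) hbt hb
      rcases Nat.lt_or_ge (n - j) a with hat | hah
      · obtain ⟨hxa, hea⟩ := gv_tail_eq n i j hj hij hi hn (⇑σ) hat (by omega)
        rw [hea, heb] at hgv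
        have hidx : (⟨a - (n - j + 1), hxa⟩ : Fin (j-1)) = ⟨b - (n - j + 1), hxb⟩ :=
          σ.injective (Fin.val_injective hgv)
        have h2 : a - (n - j + 1) = b - (n - j + 1) := congrArg Fin.val hidx
        omega
      · have hblt := gv_tail_lt n i j hj hij hi hn (⇑σ) hbt hb
        rcases Nat.eq_zero_or_pos a with h | h
        · rw [h, gv_zero] at hgv; omega
        · have := gv_head_ge n i j hj hij hi (⇑σ) h hah; omega
    · rcases Nat.eq_zero_or_pos a with h | h
      · rw [h, gv_zero] at hgv
        by_cases hb1 : b = 1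
        · rw [hb1, gv_one n i j (⇑σ)] at hgv; omega
        · rw [gv_head n i j (⇑σ) (by omega) hbh] at hgv
          exact absurd hgv.symm (tval_ne (i := i) (j := j) (m := b) hj hij (by omega))
      · have := gv_mono n i j hj hij (⇑σ) h hab hbh; omega
  intro p q h
  have hval : gv n i j (⇑σ) (p : ℕ) = gv n i j (⇑σ) (q : ℕ) := congrArg Fin.val h
  rcases lt_trichotomy (p : ℕ) (q : ℕ) with hc | hc | hc
  · exact absurd hval (key _ _ hc q.isLt)
  · exact Fin.val_injective hc
  · exact absurd hval.symm (key _ _ hc p.isLt)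

lemma gfun_avoids1 (n i j : ℕ) (hj : 2 ≤ j) (hij : j < i) (hi : i ≤ n - 1) (hn : 4 ≤ n)
    (σ : Fin (j-1) → Fin (j-1)) (ha : avoidsPat σ ![1,3,0,2]) :
    avoidsPat (gfun n i j hj hij hi σ) ![1,3,0,2] := by
  intro hcon
  obtain ⟨q0, q1, q2, q3, h01, h12, h23, hA, hB, hC⟩ := chain_of_contains_1302 _ hcon
  have h01' := Fin.lt_def.mp h01
  have h12' := Fin.lt_def.mp h12
  have h23' := Fin.lt_def.mp h23
  have hA' : gv n i j σ (q2 : ℕ) < gv n i j σ (q0 : ℕ) := hA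
  have hB' : gv n i j σ (q0 : ℕ) < gv n i j σ (q3 : ℕ) := hB
  have hC' : gv n i j σ (q3 : ℕ) < gv n i j σ (q1 : ℕ) := hC
  rcases Nat.lt_or_ge (n - j) (q3 : ℕ) with htail | hhead
  · have h3v := gv_tail_lt n i j hj hij hi hn σ htail q3.isLt
    have h0t : n - j < (q0 : ℕ) := by
      by_contra hle
      push_neg at hle
      rcases Nat.eq_zero_or_pos (q0 : ℕ) with h | h
      · rw [h, gv_zero] at hB'; omega
      · have := gv_head_ge n i j hj hij hi σ h hle; omega
    have h1t : n - j < (q1 : ℕ) := by omega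
    have h2t : n - j < (q2 : ℕ) := by omega
    obtain ⟨hx0, he0⟩ := gv_tail_eq n i j hj hij hi hn σ h0t q0.isLt
    obtain ⟨hx1, he1⟩ := gv_tail_eq n i j hj hij hi hn σ h1t q1.isLt
    obtain ⟨hx2, he2⟩ := gv_tail_eq n i j hj hij hi hn σ h2t q2.isLt
    obtain ⟨hx3, he3⟩ := gv_tail_eq n i j hj hij hi hn σ htail q3.isLt
    exact ha (contains_1302 σ ⟨_, hx0⟩ ⟨_, hx1⟩ ⟨_, hx2⟩ ⟨_, hx3⟩
      (Fin.mk_lt_mk.mpr (by omega)) (Fin.mk_lt_mk.mpr (by omega)) (Fin.mk_lt_mk.mpr (by omega))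
      (by rw [← he2, ← he0]; exact hA') (by rw [← he0, ← he3]; exact hB')
      (by rw [← he3, ← he1]; exact hC'))
  · rcases Nat.eq_zero_or_pos (q0 : ℕ) with h | h
    · have := gv_mono n i j hj hij σ (show 1 ≤ (q1 : ℕ) by omega)
        (show (q1:ℕ) < (q3:ℕ) by omega) hhead
      omega
    · have := gv_mono n i j hj hij σ h (show (q0:ℕ) < (q2:ℕ) by omega) (by omega)
      omega

lemma gfun_avoids2 (n i j : ℕ) (hj : 2 ≤ j) (hij : j < i) (hi : i ≤ n - 1) (hn : 4 ≤ n)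
    (σ : Fin (j-1) → Fin (j-1)) (ha : avoidsPat σ ![1,3,2,0]) :
    avoidsPat (gfun n i j hj hij hi σ) ![1,3,2,0] := by
  intro hcon
  obtain ⟨q0, q1, q2, q3, h01, h12, h23, hA, hB, hC⟩ := chain_of_contains_1320 _ hcon
  have h01' := Fin.lt_def.mp h01
  have h12' := Fin.lt_def.mp h12
  have h23' := Fin.lt_def.mp h23
  have hA' : gv n i j σ (q3 : ℕ) < gv n i j σ (q0 : ℕ) := hA
  have hB' : gv n i j σ (q0 : ℕ) < gv n i j σ (q2 : ℕ) := hB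
  have hC' : gv n i j σ (q2 : ℕ) < gv n i j σ (q1 : ℕ) := hC
  rcases Nat.lt_or_ge (n - j) (q2 : ℕ) with htail | hhead
  · have h2v := gv_tail_lt n i j hj hij hi hn σ htail q2.isLt
    have h0t : n - j < (q0 : ℕ) := by
      by_contra hle
      push_neg at hle
      rcases Nat.eq_zero_or_pos (q0 : ℕ) with h | h
      · rw [h, gv_zero] at hB'; omega
      · have := gv_head_ge n i j hj hij hi σ h hle; omega
    have h1t : n - j < (q1 : ℕ) := by omega
    have h3t : n - j < (q3 : ℕ) := by omega
    obtain ⟨hx0, he0⟩ := gv_tail_eq n i j hj hij hi hn σ h0t q0.isLt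
    obtain ⟨hx1, he1⟩ := gv_tail_eq n i j hj hij hi hn σ h1t q1.isLt
    obtain ⟨hx2, he2⟩ := gv_tail_eq n i j hj hij hi hn σ htail q2.isLt
    obtain ⟨hx3, he3⟩ := gv_tail_eq n i j hj hij hi hn σ h3t q3.isLt
    exact ha (contains_1320 σ ⟨_, hx0⟩ ⟨_, hx1⟩ ⟨_, hx2⟩ ⟨_, hx3⟩
      (Fin.mk_lt_mk.mpr (by omega)) (Fin.mk_lt_mk.mpr (by omega)) (Fin.mk_lt_mk.mpr (by omega))
      (by rw [← he3, ← he0]; exact hA') (by rw [← he0, ← he2]; exact hB')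
      (by rw [← he2, ← he1]; exact hC'))
  · have := gv_mono n i j hj hij σ (show 1 ≤ (q1 : ℕ) by omega)
      (show (q1:ℕ) < (q2:ℕ) by omega) hhead
    omega

lemma gfun_avoids3 (n i j : ℕ) (hj : 2 ≤ j) (hij : j < i) (hi : i ≤ n - 1) (hn : 4 ≤ n)
    (σ : Fin (j-1) → Fin (j-1)) (ha : avoidsPat σ ![2,1,0,3]) :
    avoidsPat (gfun n i j hj hij hi σ) ![2,1,0,3] := by
  intro hcon
  obtain ⟨q0, q1, q2, q3, h01, h12, h23, hA, hB, hC⟩ := chain_of_contains_2103 _ hcon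
  have h01' := Fin.lt_def.mp h01
  have h12' := Fin.lt_def.mp h12
  have h23' := Fin.lt_def.mp h23
  have hA' : gv n i j σ (q2 : ℕ) < gv n i j σ (q1 : ℕ) := hA
  have hB' : gv n i j σ (q1 : ℕ) < gv n i j σ (q0 : ℕ) := hB
  have hC' : gv n i j σ (q0 : ℕ) < gv n i j σ (q3 : ℕ) := hC
  rcases Nat.lt_or_ge (n - j) (q3 : ℕ) with htail | hhead
  · have h3v := gv_tail_lt n i j hj hij hi hn σ htail q3.isLt
    have h0t : n - j < (q0 : ℕ) := by
      by_contra hle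
      push_neg at hle
      rcases Nat.eq_zero_or_pos (q0 : ℕ) with h | h
      · rw [h, gv_zero] at hC'; omega
      · have := gv_head_ge n i j hj hij hi σ h hle; omega
    have h1t : n - j < (q1 : ℕ) := by omega
    have h2t : n - j < (q2 : ℕ) := by omega
    obtain ⟨hx0, he0⟩ := gv_tail_eq n i j hj hij hi hn σ h0t q0.isLt
    obtain ⟨hx1, he1⟩ := gv_tail_eq n i j hj hij hi hn σ h1t q1.isLt
    obtain ⟨hx2, he2⟩ := gv_tail_eq n i j hj hij hi hn σ h2t q2.isLt
    obtain ⟨hx3, he3⟩ := gv_tail_eq n i j hj hij hi hn σ htail q3.isLt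
    exact ha (contains_2103 σ ⟨_, hx0⟩ ⟨_, hx1⟩ ⟨_, hx2⟩ ⟨_, hx3⟩
      (Fin.mk_lt_mk.mpr (by omega)) (Fin.mk_lt_mk.mpr (by omega)) (Fin.mk_lt_mk.mpr (by omega))
      (by rw [← he2, ← he1]; exact hA') (by rw [← he1, ← he0]; exact hB')
      (by rw [← he0, ← he3]; exact hC'))
  · have := gv_mono n i j hj hij σ (show 1 ≤ (q1 : ℕ) by omega)
      (show (q1:ℕ) < (q2:ℕ) by omega) (by omega)
    omega

/-- the constructed permutation. -/
noncomputable def gperm (n i j : ℕ) (hj : 2 ≤ j) (hij : j < i) (hi : i ≤ n - 1) (hn : 4 ≤ n)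
    (σ : Equiv.Perm (Fin (j-1))) : Equiv.Perm (Fin n) :=
  Equiv.ofBijective (gfun n i j hj hij hi (⇑σ))
    (Finite.injective_iff_bijective.mp (gfun_inj n i j hj hij hi hn σ))

end Gfun

section TailMap

/-- extracting the tail of a permutation with the given structure. -/
def tailFun (n i j : ℕ) (hj : 2 ≤ j) (hij : j < i) (hi : i ≤ n - 1)
    (π : Equiv.Perm (Fin n))
    (hav1 : avoidsPat (⇑π) ![1,3,0,2]) (hav2 : avoidsPat (⇑π) ![1,3,2,0])
    (hav3 : avoidsPat (⇑π) ![2,1,0,3])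
    (hp0 : (π ⟨0, by clear hj; omega⟩ : ℕ) = i - 1) (hp1 : (π ⟨1, by clear hj; omega⟩ : ℕ) = j - 1) :
    Fin (j-1) → Fin (j-1) :=
  fun y => ⟨(π ⟨n - j + 1 + (y : ℕ), by omega⟩ : ℕ),
    tail_lt n i j hj hij hi π hav1 hav2 hav3 hp0 hp1 _
      (show n - j < n - j + 1 + (y : ℕ) by omega)⟩

lemma tailFun_inj (n i j : ℕ) (hj : 2 ≤ j) (hij : j < i) (hi : i ≤ n - 1)
    (π : Equiv.Perm (Fin n))
    (hav1 : avoidsPat (⇑π) ![1,3,0,2]) (hav2 : avoidsPat (⇑π) ![1,3,2,0])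
    (hav3 : avoidsPat (⇑π) ![2,1,0,3])
    (hp0 : (π ⟨0, by clear hj; omega⟩ : ℕ) = i - 1) (hp1 : (π ⟨1, by clear hj; omega⟩ : ℕ) = j - 1) :
    Function.Injective (tailFun n i j hj hij hi π hav1 hav2 hav3 hp0 hp1) := by
  intro a b h
  have h0 := congrArg Fin.val h
  have h1 : (π ⟨n - j + 1 + (a : ℕ), by omega⟩ : ℕ) = (π ⟨n - j + 1 + (b : ℕ), by omega⟩ : ℕ) := h0
  have h2 : n - j + 1 + (a : ℕ) = n - j + 1 + (b : ℕ) :=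
    congrArg Fin.val (π.injective (Fin.val_injective h1))
  exact Fin.val_injective (show (a : ℕ) = (b : ℕ) by omega)

/-- the tail as a permutation of `Fin (j-1)`. -/
noncomputable def tailPerm (n i j : ℕ) (hj : 2 ≤ j) (hij : j < i) (hi : i ≤ n - 1)
    (π : Equiv.Perm (Fin n))
    (hav1 : avoidsPat (⇑π) ![1,3,0,2]) (hav2 : avoidsPat (⇑π) ![1,3,2,0])
    (hav3 : avoidsPat (⇑π) ![2,1,0,3])
    (hp0 : (π ⟨0, by clear hj; omega⟩ : ℕ) = i - 1) (hp1 : (π ⟨1, by clear hj; omega⟩ : ℕ) = j - 1) :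
    Equiv.Perm (Fin (j-1)) :=
  Equiv.ofBijective (tailFun n i j hj hij hi π hav1 hav2 hav3 hp0 hp1)
    (Finite.injective_iff_bijective.mp (tailFun_inj n i j hj hij hi π hav1 hav2 hav3 hp0 hp1))

lemma tailPerm_avoids (n i j : ℕ) (hj : 2 ≤ j) (hij : j < i) (hi : i ≤ n - 1)
    (π : Equiv.Perm (Fin n))
    (hav1 : avoidsPat (⇑π) ![1,3,0,2]) (hav2 : avoidsPat (⇑π) ![1,3,2,0])
    (hav3 : avoidsPat (⇑π) ![2,1,0,3])
    (hp0 : (π ⟨0, by clear hj; omega⟩ : ℕ) = i - 1) (hp1 : (π ⟨1, by clear hj; omega⟩ : ℕ) = j - 1)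
    (τ : Fin 4 → Fin 4) (hav : avoidsPat (⇑π) τ) :
    avoidsPat (⇑(tailPerm n i j hj hij hi π hav1 hav2 hav3 hp0 hp1)) τ := by
  intro hcon
  apply hav
  refine transfer (⇑π) (⇑(tailPerm n i j hj hij hi π hav1 hav2 hav3 hp0 hp1))
    (fun y => ⟨n - j + 1 + (y : ℕ), by omega⟩) ?_ (fun x => rfl) τ hcon
  intro a b hab
  have := Fin.lt_def.mp hab
  exact Fin.mk_lt_mk.mpr (by omega)

end TailMap

/-- Let T = {2413, 2431, 3214} (0-indexed: 1302, 1320, 2103). If π ∈ S_n avoids T and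
begins i, j with 2 ≤ j < i ≤ n−1, then after the first two letters π continues with the
increasing run (j+1)(j+2)⋯n with i omitted, followed by a T-avoiding permutation of
[j−1]; consequently the number of such π equals |S_{j−1}(T)|. -/
theorem stmt10 (n i j : ℕ) (hj : 2 ≤ j) (hij : j < i) (hi : i ≤ n - 1) :
    (∀ π : Equiv.Perm (Fin n),
      avoidsPat (⇑π) ![1,3,0,2] → avoidsPat (⇑π) ![1,3,2,0] → avoidsPat (⇑π) ![2,1,0,3] →
      (π ⟨0, by omega⟩ : ℕ) = i - 1 → (π ⟨1, by omega⟩ : ℕ) = j - 1 →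
      ∀ k : ℕ, ∀ hk : k < n, 2 ≤ k → k + j ≤ n →
        (π ⟨k, hk⟩ : ℕ) = if j + k - 1 < i then j + k - 2 else j + k - 1) ∧
    Nat.card {π : Equiv.Perm (Fin n) //
      (avoidsPat (⇑π) ![1,3,0,2] ∧ avoidsPat (⇑π) ![1,3,2,0] ∧
        avoidsPat (⇑π) ![2,1,0,3]) ∧
      (π ⟨0, by omega⟩ : ℕ) = i - 1 ∧ (π ⟨1, by omega⟩ : ℕ) = j - 1} =
    Nat.card {σ : Equiv.Perm (Fin (j - 1)) //
      avoidsPat (⇑σ) ![1,3,0,2] ∧ avoidsPat (⇑σ) ![1,3,2,0] ∧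
        avoidsPat (⇑σ) ![2,1,0,3]} := by
  have hn : 4 ≤ n := by omega
  constructor
  · intro π hav1 hav2 hav3 hp0 hp1 k hk h2k hkj
    exact structural n i j hj hij hi π hav1 hav2 hav3 hp0 hp1 k hk h2k hkj
  · refine Nat.card_congr ?_
    refine
      { toFun := fun x =>
          ⟨tailPerm n i j hj hij hi x.1 x.2.1.1 x.2.1.2.1 x.2.1.2.2 x.2.2.1 x.2.2.2,
           tailPerm_avoids n i j hj hij hi x.1 x.2.1.1 x.2.1.2.1 x.2.1.2.2 x.2.2.1 x.2.2.2
             _ x.2.1.1,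
           tailPerm_avoids n i j hj hij hi x.1 x.2.1.1 x.2.1.2.1 x.2.1.2.2 x.2.2.1 x.2.2.2
             _ x.2.1.2.1,
           tailPerm_avoids n i j hj hij hi x.1 x.2.1.1 x.2.1.2.1 x.2.1.2.2 x.2.2.1 x.2.2.2
             _ x.2.1.2.2⟩,
        invFun := fun y =>
          ⟨gperm n i j hj hij hi hn y.1,
           ⟨gfun_avoids1 n i j hj hij hi hn (⇑y.1) y.2.1,
            gfun_avoids2 n i j hj hij hi hn (⇑y.1) y.2.2.1,
            gfun_avoids3 n i j hj hij hi hn (⇑y.1) y.2.2.2⟩,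
           gv_zero n i j (⇑y.1), gv_one n i j (⇑y.1)⟩,
        left_inv := ?_,
        right_inv := ?_ }
    · rintro ⟨π, ⟨ha1, ha2, ha3⟩, hp0, hp1⟩
      apply Subtype.ext
      apply Equiv.ext
      intro p
      apply Fin.val_injective
      show gv n i j (⇑(tailPerm n i j hj hij hi π ha1 ha2 ha3 hp0 hp1)) (p : ℕ) = (π p : ℕ)
      rcases Nat.lt_or_ge (n - j) (p : ℕ) with htail | hhead
      · obtain ⟨hx, he⟩ := gv_tail_eq n i j hj hij hi hn
          (⇑(tailPerm n i j hj hij hi π ha1 ha2 ha3 hp0 hp1)) htail p.isLt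
        rw [he]
        have hpe : (⟨n - j + 1 + ((p : ℕ) - (n - j + 1)), by omega⟩ : Fin n) = p :=
          Fin.val_injective (show n - j + 1 + ((p : ℕ) - (n - j + 1)) = (p : ℕ) by omega)
        have step : (π (⟨n - j + 1 + ((p : ℕ) - (n - j + 1)), by omega⟩ : Fin n) : ℕ) = (π p : ℕ) := by
          rw [hpe]
        exact step
      · rcases Nat.eq_zero_or_pos (p : ℕ) with h | h
        · have hpe : p = (⟨0, by omega⟩ : Fin n) := Fin.val_injective h
          rw [hpe]
          rw [show ((⟨0, by omega⟩ : Fin n) : ℕ) = 0 from rfl, gv_zero]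
          exact hp0.symm
        · by_cases h1 : (p : ℕ) = 1
          · have hpe : p = (⟨1, by omega⟩ : Fin n) := Fin.val_injective h1
            rw [hpe]
            rw [show ((⟨1, by omega⟩ : Fin n) : ℕ) = 1 from rfl, gv_one]
            exact hp1.symm
          · have h2 : 2 ≤ (p : ℕ) := by omega
            rw [gv_head n i j _ h2 hhead]
            exact (structural n i j hj hij hi π ha1 ha2 ha3 hp0 hp1 (p : ℕ) p.isLt h2
              (by omega)).symm
    · rintro ⟨σ, hs1, hs2, hs3⟩
      apply Subtype.ext
      apply Equiv.ext
      intro x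
      apply Fin.val_injective
      show gv n i j (⇑σ) (n - j + 1 + (x : ℕ)) = (σ x : ℕ)
      obtain ⟨hx, he⟩ := gv_tail_eq n i j hj hij hi hn (⇑σ)
        (show n - j < n - j + 1 + (x : ℕ) by omega) (by have := x.isLt; omega)
      rw [he]
      have hpe : (⟨n - j + 1 + (x : ℕ) - (n - j + 1), hx⟩ : Fin (j-1)) = x :=
        Fin.val_injective (show n - j + 1 + (x : ℕ) - (n - j + 1) = (x : ℕ) by omega)
      rw [hpe]
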